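/- arXiv:2005.02187 — 2 statements merged into one kernel-verified Lean document; each statement's English description precedes it below -/
import Mathlib

section
/- Let X be a right Hilbert A-module, let x ∈ X, and let 0 < α < 1. Then there exists w ∈ X such that x = w · ⟨x, x⟩^{α/2}, where ⟨x,x⟩^{α/2} is defined by continuous functional calculus applied to the positive element ⟨x,x⟩. -/
open scoped InnerProductSpace RightActions NNReal

/-- The class `CStarModule` as it stood in Mathlib (Dec 2024): a *right* Hilbert `A`-module,
with `A` acting on the right through `Aᵐᵒᵖ` and the inner product `A`-linear in the second
argument for that right action. -/
class RightCStarModule (A : outParam <| Type*) (E : Type*) [NonUnitalSemiring A] [StarRing A]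
    [Module ℂ A] [AddCommGroup E] [Module ℂ E] [PartialOrder A] [SMul Aᵐᵒᵖ E] [Norm A] [Norm E]
    extends Inner A E where
  inner_add_right {x} {y} {z} : inner x (y + z) = inner x y + inner x z
  inner_self_nonneg {x} : 0 ≤ inner x x
  inner_self {x} : inner x x = 0 ↔ x = 0
  inner_op_smul_right {a : A} {x y : E} : inner x (y <• a) = inner x y * a
  inner_smul_right_complex {z : ℂ} {x} {y} : inner x (z • y) = z • inner x y
  star_inner x y : star (inner x y) = inner y x
  norm_eq_sqrt_norm_inner_self x : ‖x‖ = √‖inner x x‖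

namespace RightCStarModule

variable {A : Type*} [NonUnitalCStarAlgebra A] [PartialOrder A] [StarOrderedRing A]
    {X : Type*} [NormedAddCommGroup X] [NormedSpace ℂ X] [SMul Aᵐᵒᵖ X] [RightCStarModule A X]

theorem inner_sub_right' {x y z : X} : ⟪x, y - z⟫_A = ⟪x, y⟫_A - ⟪x, z⟫_A := by
  apply eq_sub_of_add_eq
  rw [← RightCStarModule.inner_add_right, sub_add_cancel]

theorem inner_add_left' {x y z : X} : ⟪y + z, x⟫_A = ⟪y, x⟫_A + ⟪z, x⟫_A := by
  rw [← RightCStarModule.star_inner x, RightCStarModule.inner_add_right, star_add,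
    RightCStarModule.star_inner, RightCStarModule.star_inner]

theorem inner_sub_left' {x y z : X} : ⟪y - z, x⟫_A = ⟪y, x⟫_A - ⟪z, x⟫_A := by
  apply eq_sub_of_add_eq
  rw [← inner_add_left', sub_add_cancel]

theorem inner_op_smul_left' {a : A} {x y : X} : ⟪y <• a, x⟫_A = star a * ⟪y, x⟫_A := by
  rw [← RightCStarModule.star_inner x, RightCStarModule.inner_op_smul_right, star_mul,
    RightCStarModule.star_inner]

theorem norm_sq_eq' {x : X} : ‖x‖ ^ 2 = ‖⟪x, x⟫_A‖ := by
  rw [RightCStarModule.norm_eq_sqrt_norm_inner_self x, Real.sq_sqrt (norm_nonneg _)]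

end RightCStarModule

attribute [simp] RightCStarModule.inner_add_right RightCStarModule.inner_op_smul_right
  RightCStarModule.inner_add_left'

section auxNNReal

private lemma aux_inv_sub_inv (t ε δ : ℝ≥0) (hε : 0 < ε) (hδ : 0 < δ) :
    (t + ε)⁻¹ - (t + δ)⁻¹ ≤ δ * ((t + ε)⁻¹ * (t + δ)⁻¹) := by
  have h1 : (t + ε) ≠ 0 := by positivity
  have h2 : (t + δ) ≠ 0 := by positivity
  rw [tsub_le_iff_right]
  have hle : t + δ ≤ δ + (t + ε) := by
    rw [add_comm t δ]; exact add_le_add_right le_self_add δ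
  calc (t + ε)⁻¹ = (t + δ) * ((t + ε)⁻¹ * (t + δ)⁻¹) := by
        rw [mul_comm ((t+ε)⁻¹), ← mul_assoc, mul_inv_cancel₀ h2, one_mul]
    _ ≤ (δ + (t + ε)) * ((t + ε)⁻¹ * (t + δ)⁻¹) := by gcongr
    _ = δ * ((t + ε)⁻¹ * (t + δ)⁻¹) + (t + δ)⁻¹ := by
        rw [add_mul, ← mul_assoc (t + ε), mul_inv_cancel₀ h1, one_mul]

private lemma aux_cauchy_bound {e : ℝ} (he0 : 0 < e) (he2 : 2 * e < 1) (t ε δ : ℝ≥0)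
    (hε : 0 < ε) (hεδ : ε ≤ δ) :
    (t ^ (1 - e) * (t + ε)⁻¹ - t ^ (1 - e) * (t + δ)⁻¹) *
      (t * (t ^ (1 - e) * (t + ε)⁻¹ - t ^ (1 - e) * (t + δ)⁻¹)) ≤ δ ^ (1 - 2 * e) := by
  have hδ : 0 < δ := hε.trans_le hεδ
  have h1 : (t + ε) ≠ 0 := by positivity
  have h2 : (t + δ) ≠ 0 := by positivity
  set B : ℝ≥0 := t ^ (1 - e) * (δ * ((t + ε)⁻¹ * (t + δ)⁻¹)) with hB_def
  have hB : t ^ (1 - e) * (t + ε)⁻¹ - t ^ (1 - e) * (t + δ)⁻¹ ≤ B := by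
    rw [tsub_le_iff_right, hB_def, ← mul_add]
    exact mul_le_mul_right (tsub_le_iff_right.mp (aux_inv_sub_inv t ε δ hε hδ)) _
  have hrp : t ^ (1 - e) * t ^ (1 - e) * t = t ^ (1 - 2 * e) * t * t := by
    have e1 : t ^ (1 - e) * t ^ (1 - e) = t ^ (2 - 2 * e) := by
      rw [show (2 - 2 * e) = (1 - e) + (1 - e) by ring,
        NNReal.rpow_add' (by intro h; nlinarith) t]
    have e2 : t ^ (2 - 2 * e) = t ^ (1 - 2 * e) * t := by
      rw [show (2 - 2 * e) = (1 - 2 * e) + 1 by ring,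
        NNReal.rpow_add' (by intro h; nlinarith) t, NNReal.rpow_one]
    rw [e1, e2]
  have hpow2 : ∀ s : ℝ≥0, s ^ ((2 : ℝ)) = s * s := fun s => by
    rw [show ((2:ℝ)) = ((2:ℕ):ℝ) by norm_num, NNReal.rpow_natCast, sq]
  calc (t ^ (1 - e) * (t + ε)⁻¹ - t ^ (1 - e) * (t + δ)⁻¹) *
        (t * (t ^ (1 - e) * (t + ε)⁻¹ - t ^ (1 - e) * (t + δ)⁻¹))
      ≤ B * (t * B) := mul_le_mul' hB (mul_le_mul_right hB t)
    _ = (t ^ (1 - e) * t ^ (1 - e) * t) * (δ * δ) *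
          ((t + ε)⁻¹ * (t + ε)⁻¹) * ((t + δ)⁻¹ * (t + δ)⁻¹) := by
        rw [hB_def]; ring
    _ = (t ^ (1 - 2 * e) * t * t) * (δ * δ) *
          ((t + ε)⁻¹ * (t + ε)⁻¹) * ((t + δ)⁻¹ * (t + δ)⁻¹) := by rw [hrp]
    _ ≤ ((t + δ) ^ (1 - 2 * e) * (t + ε) * (t + ε)) * (δ * δ) *
          ((t + ε)⁻¹ * (t + ε)⁻¹) * ((t + δ)⁻¹ * (t + δ)⁻¹) := by
        gcongr <;> first | linarith | exact le_self_add
    _ = (δ * δ) * ((t + δ) ^ (1 - 2 * e) * ((t + δ)⁻¹ * (t + δ)⁻¹)) *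
          (((t + ε) * (t + ε)⁻¹) * ((t + ε) * (t + ε)⁻¹)) := by ring
    _ = (δ * δ) * ((t + δ) ^ (1 - 2 * e) * ((t + δ)⁻¹ * (t + δ)⁻¹)) := by
        rw [mul_inv_cancel₀ h1]; ring
    _ = (δ * δ) * (t + δ) ^ (1 - 2 * e - 2) := by
        rw [← mul_inv, ← hpow2 (t + δ), ← NNReal.rpow_neg,
          ← NNReal.rpow_add' (by intro h; linarith : (1 - 2 * e) + -(2:ℝ) ≠ 0) (t + δ)]
        ring_nf
    _ ≤ (δ * δ) * δ ^ (1 - 2 * e - 2) := by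
        gcongr (δ * δ) * ?_
        rw [show (1 - 2 * e - 2) = -(2 * e + 1) by ring, NNReal.rpow_neg, NNReal.rpow_neg]
        gcongr
        · exact le_add_self
    _ = δ ^ (1 - 2 * e) := by
        rw [← hpow2 δ, ← NNReal.rpow_add hδ.ne']
        ring_nf

private lemma aux_psi_le (t ε : ℝ≥0) (hε : 0 < ε) :
    t * ε ^ 2 * ((t + ε)⁻¹) ^ 2 ≤ ε := by
  have h1 : (t + ε) ≠ 0 := by positivity
  have hb : ∀ s : ℝ≥0, s ≤ t + ε → s * (t + ε)⁻¹ ≤ 1 := fun s hs => by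
    rw [← mul_inv_cancel₀ h1]
    exact mul_le_mul_left hs _
  calc t * ε ^ 2 * ((t + ε)⁻¹) ^ 2 = (t * (t + ε)⁻¹) * (ε * (t + ε)⁻¹) * ε := by ring
    _ ≤ 1 * 1 * ε := by
        gcongr
        · exact hb t le_self_add
        · exact hb ε le_add_self
    _ = ε := by ring

private lemma aux_identity (t ε : ℝ≥0) (hε : 0 < ε) :
    t + (t * (t + ε)⁻¹) * (t * (t * (t + ε)⁻¹)) =
      t * ε ^ 2 * ((t + ε)⁻¹) ^ 2 + (t * (t + ε)⁻¹ * t + t * (t * (t + ε)⁻¹)) := by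
  have h1 : (t + ε) ≠ 0 := by positivity
  field_simp
  ring

end auxNNReal

section auxModule

variable {A : Type*} [NonUnitalCStarAlgebra A] [PartialOrder A] [StarOrderedRing A]
    {X : Type*} [NormedAddCommGroup X] [NormedSpace ℂ X] [SMul Aᵐᵒᵖ X] [RightCStarModule A X]

set_option linter.unusedSectionVars false

private lemma my_ext_inner {u v : X} (h : ∀ z : X, ⟪z, u⟫_A = ⟪z, v⟫_A) : u = v := by
  have h2 : ⟪u - v, u - v⟫_A = 0 := by
    rw [RightCStarModule.inner_sub_right', h (u - v), sub_self]
  rwa [RightCStarModule.inner_self, sub_eq_zero] at h2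

private lemma my_smul_add {y : X} {a b : A} : y <• (a + b) = y <• a + y <• b := by
  apply my_ext_inner; intro z
  simp [← MulOpposite.op_add, mul_add]

private lemma my_smul_mul {y : X} {a b : A} : y <• (a * b) = (y <• a) <• b := by
  apply my_ext_inner; intro z
  simp [← MulOpposite.op_mul, mul_assoc]

private lemma my_add_smul {y z : X} {a : A} : (y + z) <• a = y <• a + z <• a := by
  apply my_ext_inner; intro v
  simp [add_mul]

private lemma my_sub_smul {y z : X} {a : A} : (y - z) <• a = y <• a - z <• a := by
  have := my_add_smul (y := y - z) (z := z) (a := a) (X := X)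
  rw [sub_add_cancel] at this
  rw [this]; abel

private lemma my_norm_smul_le {y : X} {a : A} : ‖y <• a‖ ≤ ‖y‖ * ‖a‖ := by
  have h : ‖y <• a‖ ^ 2 ≤ (‖y‖ * ‖a‖) ^ 2 := by
    rw [RightCStarModule.norm_sq_eq']
    simp only [RightCStarModule.inner_op_smul_left', RightCStarModule.inner_op_smul_right]
    calc ‖star a * ⟪y, y⟫_A * a‖ ≤ ‖star a * ⟪y, y⟫_A‖ * ‖a‖ := norm_mul_le _ _
      _ ≤ ‖star a‖ * ‖⟪y, y⟫_A‖ * ‖a‖ := by gcongr; exact norm_mul_le _ _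
      _ = ‖⟪y, y⟫_A‖ * (‖a‖ * ‖a‖) := by rw [norm_star]; ring
      _ = ‖y‖ ^ 2 * (‖a‖ * ‖a‖) := by rw [RightCStarModule.norm_sq_eq']
      _ = (‖y‖ * ‖a‖) ^ 2 := by ring
  exact (pow_le_pow_iff_left₀ (norm_nonneg _) (by positivity) (by norm_num)).mp h

private lemma my_norm_le_sqrt {u : X} {C : ℝ≥0} (h : ‖⟪u, u⟫_A‖₊ ≤ C) :
    ‖u‖ ≤ Real.sqrt C := by
  rw [RightCStarModule.norm_eq_sqrt_norm_inner_self]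
  exact Real.sqrt_le_sqrt h

end auxModule

set_option maxHeartbeats 2000000 in
/-- For any element `x` of a right Hilbert `A`-module `X` and any
`0 < α < 1`, there exists `w ∈ X` with `x = w · ⟪x, x⟫^{α/2}`, the power being taken via
the (non-unital) continuous functional calculus on the positive element `⟪x, x⟫`. -/
theorem exists_factor_through_power_of_inner_self
    {A : Type*} [NonUnitalCStarAlgebra A] [PartialOrder A] [StarOrderedRing A]
    {X : Type*} [NormedAddCommGroup X] [NormedSpace ℂ X] [SMul Aᵐᵒᵖ X] [RightCStarModule A X]
    [CompleteSpace X]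
    (x : X) (α : ℝ≥0) (hα0 : 0 < α) (hα1 : α < 1) :
    ∃ w : X, x = w <• (CFC.nnrpow (⟪x, x⟫_A) (α / 2)) := by
  set p : A := ⟪x, x⟫_A with hp_def
  have hp0 : 0 ≤ p := RightCStarModule.inner_self_nonneg
  set e : ℝ := (α : ℝ) / 2 with he_def
  have hα0' : (0:ℝ) < α := hα0
  have hα1' : (α:ℝ) < 1 := hα1
  have he0 : 0 < e := by rw [he_def]; linarith
  have he2 : 2 * e < 1 := by rw [he_def]; linarith
  -- selfadjointness of nonneg cfc elements
  have sa : ∀ f : ℝ≥0 → ℝ≥0, star (cfcₙ f p) = cfcₙ f p := fun f =>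
    IsSelfAdjoint.star_eq (IsSelfAdjoint.of_nonneg (cfcₙ_predicate _ _))
  -- the power as a cfc
  have hq : CFC.nnrpow p (α / 2) = cfcₙ (fun t : ℝ≥0 => t ^ e) p := by
    rw [show CFC.nnrpow p (α / 2) = cfcₙ (fun t : ℝ≥0 => NNReal.nnrpow t (α / 2)) p from rfl]
    congr 1
    try
      funext t
      rw [NNReal.nnrpow_def]
      congr 1
      rw [he_def]
      push_cast
      try ring
  -- the key inner-product formula
  have key : ∀ f g : ℝ≥0 → ℝ≥0, Continuous f → f 0 = 0 → Continuous g → g 0 = 0 →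
      ⟪x <• cfcₙ f p, x <• cfcₙ g p⟫_A = cfcₙ (fun t => f t * (t * g t)) p := by
    intro f g hf hf0 hg hg0
    rw [RightCStarModule.inner_op_smul_left', RightCStarModule.inner_op_smul_right, sa f]
    have h1 : cfcₙ (fun t => f t * (t * g t)) p
        = cfcₙ f p * cfcₙ (fun t : ℝ≥0 => t * g t) p :=
      cfcₙ_mul _ _ p hf.continuousOn hf0 (continuous_id.mul hg).continuousOn (by simp)
    have h2 : cfcₙ (fun t : ℝ≥0 => t * g t) p = cfcₙ (id : ℝ≥0 → ℝ≥0) p * cfcₙ g p :=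
      cfcₙ_mul _ _ p continuous_id.continuousOn rfl hg.continuousOn hg0
    rw [h1, h2, cfcₙ_id ℝ≥0 p, ← mul_assoc, mul_assoc]
  -- the auxiliary functions
  set g : ℝ≥0 → ℝ≥0 → ℝ≥0 := fun η t => t ^ (1 - e) * (t + η)⁻¹ with hg_def
  set φ : ℝ≥0 → ℝ≥0 → ℝ≥0 := fun η t => t * (t + η)⁻¹ with hφ_def
  have h1e : (0:ℝ) < 1 - e := by linarith
  have hgc : ∀ η : ℝ≥0, 0 < η → Continuous (g η) := fun η hη =>
    (NNReal.continuous_rpow_const h1e.le).mul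
      ((continuous_id.add continuous_const).inv₀ fun t => (add_pos_of_nonneg_of_pos (zero_le (a := t)) hη).ne')
  have hg0 : ∀ η : ℝ≥0, g η 0 = 0 := fun η => by
    simp [hg_def, NNReal.zero_rpow h1e.ne']
  have hφc : ∀ η : ℝ≥0, 0 < η → Continuous (φ η) := fun η hη =>
    continuous_id.mul ((continuous_id.add continuous_const).inv₀ fun t => (add_pos_of_nonneg_of_pos (zero_le (a := t)) hη).ne')
  have hφ0 : ∀ η : ℝ≥0, φ η 0 = 0 := fun η => by simp [hφ_def]
  -- the Cauchy estimate
  have hdiff : ∀ η δ : ℝ≥0, 0 < η → η ≤ δ →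
      ‖x <• cfcₙ (g η) p - x <• cfcₙ (g δ) p‖ ≤ Real.sqrt (δ ^ (1 - 2 * e) : ℝ≥0) := by
    intro η δ h1 h2
    have hδ : 0 < δ := h1.trans_le h2
    set h : ℝ≥0 → ℝ≥0 := fun t => g η t - g δ t with hh_def
    have hc : Continuous h := (hgc η h1).sub (hgc δ hδ)
    have h0 : h 0 = 0 := by simp [hh_def, hg0]
    have hmono : ∀ t, g δ t ≤ g η t := by
      intro t
      apply mul_le_mul_right
      exact inv_anti₀ (by positivity) (by gcongr)
    have hsplit : x <• cfcₙ (g η) p = x <• cfcₙ (g δ) p + x <• cfcₙ h p := by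
      have hfun : (fun t => g δ t + h t) = g η := funext fun t => add_tsub_cancel_of_le (hmono t)
      rw [← my_smul_add,
        ← cfcₙ_add (g δ) h p (hgc δ hδ).continuousOn (hg0 δ) hc.continuousOn h0, hfun]
    have hd : x <• cfcₙ (g η) p - x <• cfcₙ (g δ) p = x <• cfcₙ h p := by
      rw [hsplit]; abel
    rw [hd]
    apply my_norm_le_sqrt
    rw [key h h hc h0 hc h0]
    apply nnnorm_cfcₙ_nnreal_le
    intro t _
    exact aux_cauchy_bound he0 he2 t η δ h1 h2
  -- the sequence
  set ε : ℕ → ℝ≥0 := fun n => ((n : ℝ≥0) + 1)⁻¹ with hε_def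
  have hεpos : ∀ n, 0 < ε n := fun n => by positivity
  have hεanti : ∀ {n m : ℕ}, n ≤ m → ε m ≤ ε n := fun {n m} h => by
    apply inv_anti₀ (by positivity)
    have hcast : (n : ℝ≥0) ≤ (m : ℝ≥0) := Nat.cast_le.mpr h
    gcongr
  set u : ℕ → X := fun n => x <• cfcₙ (g (ε n)) p with hu_def
  -- u is Cauchy
  have hb_mono : ∀ {η δ : ℝ≥0}, η ≤ δ →
      Real.sqrt (η ^ (1 - 2 * e) : ℝ≥0) ≤ Real.sqrt (δ ^ (1 - 2 * e) : ℝ≥0) := by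
    intro η δ h
    apply Real.sqrt_le_sqrt
    exact_mod_cast NNReal.rpow_le_rpow h (by linarith)
  have hcauchy : CauchySeq u := by
    apply cauchySeq_of_le_tendsto_0 (b := fun N => Real.sqrt ((ε N) ^ (1 - 2 * e) : ℝ≥0))
    · intro n m N hn hm
      rw [dist_eq_norm]
      simp only [hu_def]
      rcases le_total (ε n) (ε m) with hc | hc
      · exact (hdiff (ε n) (ε m) (hεpos n) hc).trans (hb_mono (hεanti hm))
      · rw [norm_sub_rev]
        exact (hdiff (ε m) (ε n) (hεpos m) hc).trans (hb_mono (hεanti hn))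
    · have h1 : Filter.Tendsto (fun n : ℕ => ((ε n : ℝ≥0) : ℝ)) Filter.atTop (nhds 0) := by
        have : ∀ n : ℕ, ((ε n : ℝ≥0) : ℝ) = 1 / ((n : ℝ) + 1) := fun n => by
          rw [hε_def]; push_cast; rw [one_div]
        simp_rw [this]
        exact tendsto_one_div_add_atTop_nhds_zero_nat
      have h2 : Filter.Tendsto (fun n : ℕ => (((ε n) ^ (1 - 2 * e) : ℝ≥0) : ℝ))
          Filter.atTop (nhds 0) := by
        simp_rw [NNReal.coe_rpow]
        have hc : ContinuousAt (fun s : ℝ => s ^ (1 - 2 * e)) 0 :=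
          Real.continuousAt_rpow_const 0 _ (Or.inr (by linarith))
        have := hc.tendsto.comp h1
        rwa [Real.zero_rpow (by linarith : (1:ℝ) - 2 * e ≠ 0)] at this
      have := (Real.continuous_sqrt.continuousAt (x := (0:ℝ))).tendsto.comp h2
      rwa [Real.sqrt_zero] at this
  obtain ⟨w, hw⟩ := cauchySeq_tendsto_of_complete hcauchy
  refine ⟨w, ?_⟩
  -- claim A : u n <• q = x <• cfcₙ (φ (ε n)) p
  have claimA : ∀ n, u n <• CFC.nnrpow p (α / 2) = x <• cfcₙ (φ (ε n)) p := by
    intro n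
    have hfun2 : (fun t : ℝ≥0 => g (ε n) t * t ^ e) = φ (ε n) := by
      funext t
      show t ^ (1 - e) * (t + ε n)⁻¹ * t ^ e = t * (t + ε n)⁻¹
      rw [mul_right_comm, ← NNReal.rpow_add' (by norm_num : (1:ℝ) - e + e ≠ 0) t]
      norm_num
    rw [hu_def, hq, ← my_smul_mul,
      ← cfcₙ_mul (g (ε n)) (fun t : ℝ≥0 => t ^ e) p (hgc _ (hεpos n)).continuousOn (hg0 _)
        (NNReal.continuous_rpow_const he0.le).continuousOn (NNReal.zero_rpow he0.ne'), hfun2]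
  -- claim B : x <• cfcₙ (φ η) p is close to x
  have claimB : ∀ η : ℝ≥0, 0 < η → ‖x <• cfcₙ (φ η) p - x‖ ≤ Real.sqrt η := by
    intro η hη
    set f : A := cfcₙ (φ η) p with hf_def
    set ψ : ℝ≥0 → ℝ≥0 := fun t => t * η ^ 2 * ((t + η)⁻¹) ^ 2 with hψ_def
    have hψc : Continuous ψ :=
      ((continuous_id.mul continuous_const).mul
        (((continuous_id.add continuous_const).inv₀ fun t => (add_pos_of_nonneg_of_pos (zero_le (a := t)) hη).ne').pow 2))
    have hψ0 : ψ 0 = 0 := by simp [hψ_def]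
    have hident : cfcₙ (fun t : ℝ≥0 => t) p + cfcₙ (fun t : ℝ≥0 => φ η t * (t * φ η t)) p
        = cfcₙ ψ p + (cfcₙ (fun t : ℝ≥0 => φ η t * t) p
            + cfcₙ (fun t : ℝ≥0 => t * φ η t) p) := by
      have hA1 : cfcₙ (fun t : ℝ≥0 => t + φ η t * (t * φ η t)) p
          = cfcₙ (fun t : ℝ≥0 => t) p + cfcₙ (fun t : ℝ≥0 => φ η t * (t * φ η t)) p :=
        cfcₙ_add (fun t : ℝ≥0 => t) (fun t => φ η t * (t * φ η t)) p
          continuous_id.continuousOn rfl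
          ((hφc η hη).mul (continuous_id.mul (hφc η hη))).continuousOn (by simp [hφ0])
      have hA2 : cfcₙ (fun t : ℝ≥0 => ψ t + (φ η t * t + t * φ η t)) p
          = cfcₙ ψ p + (cfcₙ (fun t : ℝ≥0 => φ η t * t) p
              + cfcₙ (fun t : ℝ≥0 => t * φ η t) p) := by
        rw [cfcₙ_add ψ (fun t => φ η t * t + t * φ η t) p hψc.continuousOn hψ0
            (((hφc η hη).mul continuous_id).add
              (continuous_id.mul (hφc η hη))).continuousOn (by simp [hφ0]),
          cfcₙ_add (fun t : ℝ≥0 => φ η t * t) (fun t => t * φ η t) p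
            ((hφc η hη).mul continuous_id).continuousOn (by simp [hφ0])
            (continuous_id.mul (hφc η hη)).continuousOn (by simp [hφ0])]
      have hfunid : (fun t : ℝ≥0 => t + φ η t * (t * φ η t))
          = fun t : ℝ≥0 => ψ t + (φ η t * t + t * φ η t) :=
        funext fun t => aux_identity t η hη
      rw [← hA1, hfunid, hA2]
    have hexp : ⟪x <• f - x, x <• f - x⟫_A = cfcₙ ψ p := by
      rw [RightCStarModule.inner_sub_left', RightCStarModule.inner_sub_right',
        RightCStarModule.inner_sub_right']
      rw [hf_def, key _ _ (hφc η hη) (hφ0 η) (hφc η hη) (hφ0 η)]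
      have hfp : cfcₙ (fun t : ℝ≥0 => φ η t * t) p = cfcₙ (φ η) p * p := by
        rw [cfcₙ_mul (φ η) (fun t : ℝ≥0 => t) p (hφc η hη).continuousOn (hφ0 η)
          continuous_id.continuousOn rfl, cfcₙ_id' ℝ≥0 p]
      have hpf : cfcₙ (fun t : ℝ≥0 => t * φ η t) p = p * cfcₙ (φ η) p := by
        rw [cfcₙ_mul (fun t : ℝ≥0 => t) (φ η) p continuous_id.continuousOn rfl
          (hφc η hη).continuousOn (hφ0 η), cfcₙ_id' ℝ≥0 p]
      have e1 : ⟪x <• cfcₙ (φ η) p, x⟫_A = cfcₙ (fun t : ℝ≥0 => φ η t * t) p := by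
        rw [RightCStarModule.inner_op_smul_left', sa, ← hp_def, hfp]
      have e2 : ⟪x, x <• cfcₙ (φ η) p⟫_A = cfcₙ (fun t : ℝ≥0 => t * φ η t) p := by
        rw [RightCStarModule.inner_op_smul_right, ← hp_def, hpf]
      rw [e1, e2, ← hp_def]
      rw [cfcₙ_id' ℝ≥0 p] at hident
      have hS : cfcₙ ψ p = p + cfcₙ (fun t : ℝ≥0 => φ η t * (t * φ η t)) p
          - (cfcₙ (fun t : ℝ≥0 => φ η t * t) p + cfcₙ (fun t : ℝ≥0 => t * φ η t) p) :=
        eq_sub_of_add_eq hident.symm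
      rw [hS]; abel
    have : ‖x <• f - x‖ ≤ Real.sqrt η := by
      apply my_norm_le_sqrt
      rw [hexp]
      apply nnnorm_cfcₙ_nnreal_le
      intro t _
      exact aux_psi_le t η hη
    exact this
  -- limit of u n <• q
  set q : A := CFC.nnrpow p (α / 2) with hq_def
  have limA : Filter.Tendsto (fun n => u n <• q) Filter.atTop (nhds (w <• q)) := by
    rw [tendsto_iff_norm_sub_tendsto_zero]
    have hbound : ∀ n, ‖u n <• q - w <• q‖ ≤ ‖u n - w‖ * ‖q‖ := fun n => by
      rw [← my_sub_smul]; exact my_norm_smul_le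
    have hlim : Filter.Tendsto (fun n => ‖u n - w‖ * ‖q‖) Filter.atTop (nhds 0) := by
      have := (tendsto_iff_norm_sub_tendsto_zero.mp hw).mul_const ‖q‖
      rwa [zero_mul] at this
    exact squeeze_zero (fun n => norm_nonneg _) hbound hlim
  have limB : Filter.Tendsto (fun n => u n <• q) Filter.atTop (nhds x) := by
    rw [tendsto_iff_norm_sub_tendsto_zero]
    have hbound : ∀ n, ‖u n <• q - x‖ ≤ Real.sqrt (ε n) := fun n => by
      rw [hq_def, claimA n]
      exact claimB (ε n) (hεpos n)
    have hlim : Filter.Tendsto (fun n : ℕ => Real.sqrt (ε n)) Filter.atTop (nhds 0) := by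
      have h1 : Filter.Tendsto (fun n : ℕ => ((ε n : ℝ≥0) : ℝ)) Filter.atTop (nhds 0) := by
        have : ∀ n : ℕ, ((ε n : ℝ≥0) : ℝ) = 1 / ((n : ℝ) + 1) := fun n => by
          rw [hε_def]; push_cast; rw [one_div]
        simp_rw [this]
        exact tendsto_one_div_add_atTop_nhds_zero_nat
      have := (Real.continuous_sqrt.continuousAt (x := (0:ℝ))).tendsto.comp h1
      rwa [Real.sqrt_zero] at this
    exact squeeze_zero (fun n => norm_nonneg _) hbound hlim
  exact tendsto_nhds_unique limB limA
end

section
/- Let A be a σ-unital C*-algebra with sequential approximate identity (u_n), set v_1 = u_1^{1/2} and v_i = (u_i − u_{i−1})^{1/2} for i > 1, and let e_{ij} ∈ H_A (the standard Hilbert A-module of sequences (a_n) with Σ a_n* a_n convergent) be the sequence whose j-th entry is v_i and all other entries 0. Then the finite sums Σ_{i,j=1}^{n} Θ_{e_{ij}, e_{ij}} form an approximate unit for K(H_A); that is, (e_{ij}) is a frame for H_A. -/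
/-- The `A`-valued inner product `⟨x, y⟩ = Σₙ xₙ* yₙ` on sequences in `A`. -/
noncomputable def seqInner {A : Type*} [NonUnitalCStarAlgebra A] (x y : ℕ → A) : A :=
  ∑' n, star (x n) * y n

/-- Membership in the standard Hilbert `A`-module `H_A` of sequences `(aₙ)` for which
`Σₙ aₙ* aₙ` converges in `A`. -/
def MemHilbSeq {A : Type*} [NonUnitalCStarAlgebra A] (x : ℕ → A) : Prop :=
  Summable fun n => star (x n) * x n

/-- The Hilbert-module norm `‖x‖ = √‖⟨x, x⟩‖` on `H_A`. -/
noncomputable def seqNorm {A : Type*} [NonUnitalCStarAlgebra A] (x : ℕ → A) : ℝ :=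
  Real.sqrt ‖seqInner x x‖

/-- The rank-one operator `Θ_{x,y} : z ↦ x · ⟨y, z⟩` on sequences. -/
noncomputable def seqTheta {A : Type*} [NonUnitalCStarAlgebra A] (x y : ℕ → A) :
    (ℕ → A) → (ℕ → A) :=
  fun z n => x n * seqInner y z

/-- Membership in the compact operators `K(H_A)`: `T` preserves `H_A` and is approximated,
in the operator norm over `H_A`, by finite linear combinations of rank-one operators with
vectors in `H_A`. -/
noncomputable def SeqInCompacts {A : Type*} [NonUnitalCStarAlgebra A]
    (T : (ℕ → A) → (ℕ → A)) : Prop :=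
  (∀ x, MemHilbSeq x → MemHilbSeq (T x)) ∧
  ∀ ε : ℝ, 0 < ε → ∃ (n : ℕ) (c : Fin n → ℂ) (u v : Fin n → ℕ → A),
    (∀ i, MemHilbSeq (u i) ∧ MemHilbSeq (v i)) ∧
    ∀ z, MemHilbSeq z →
      seqNorm (T z - ∑ i, c i • seqTheta (u i) (v i) z) ≤ ε * seqNorm z

/-- The sequence `v` built from an increasing approximate identity: `v₀ = u₀^{1/2}` and
`vᵢ = (uᵢ − u_{i−1})^{1/2}` for `i ≥ 1`. -/
noncomputable def frameRoot {A : Type*} [NonUnitalCStarAlgebra A] [PartialOrder A]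
    [StarOrderedRing A] (u : ℕ → A) : ℕ → A
  | 0 => CFC.sqrt (u 0)
  | (i + 1) => CFC.sqrt (u (i + 1) - u i)

/-- The frame element `e_{ij} ∈ H_A`: the sequence whose `j`-th entry is `vᵢ` and whose
other entries vanish. -/
noncomputable def frameElem {A : Type*} [NonUnitalCStarAlgebra A] [PartialOrder A]
    [StarOrderedRing A] (u : ℕ → A) (i j : ℕ) : ℕ → A :=
  fun n => if n = j then frameRoot u i else 0

open scoped WithCStarModule

section Aux
set_option linter.unusedSectionVars false
variable {A : Type*} [NonUnitalCStarAlgebra A] [PartialOrder A] [StarOrderedRing A]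

open Finset in
lemma cs_fin (s : Finset ℕ) (x y : ℕ → A) :
    ‖∑ n ∈ s, star (x n) * y n‖ ≤
      Real.sqrt ‖∑ n ∈ s, star (x n) * x n‖ * Real.sqrt ‖∑ n ∈ s, star (y n) * y n‖ := by
  let X : C⋆ᵐᵒᵈ(A, ∀ _ : s, A) := (WithCStarModule.equiv A (∀ _ : s, A)).symm fun i => star (x i)
  let Y : C⋆ᵐᵒᵈ(A, ∀ _ : s, A) := (WithCStarModule.equiv A (∀ _ : s, A)).symm fun i => star (y i)
  have h := CStarModule.norm_inner_le (A := A) (C⋆ᵐᵒᵈ(A, ∀ _ : s, A)) (x := Y) (y := X)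
  rw [WithCStarModule.pi_inner, WithCStarModule.pi_norm, WithCStarModule.pi_norm] at h
  rw [← Finset.sum_attach s fun n => star (x n) * y n,
    ← Finset.sum_attach s fun n => star (x n) * x n,
    ← Finset.sum_attach s fun n => star (y n) * y n]
  simpa [X, Y, WithCStarModule.inner_def] using h.trans (le_of_eq (mul_comm _ _))

lemma sum_star_mul_self_nonneg (x : ℕ → A) (s : Finset ℕ) :
    (0 : A) ≤ ∑ n ∈ s, star (x n) * x n :=
  Finset.sum_nonneg fun _ _ => star_mul_self_nonneg _

lemma norm_sum_le_norm_tsum {x : ℕ → A} (hx : MemHilbSeq x) (s : Finset ℕ) :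
    ‖∑ n ∈ s, star (x n) * x n‖ ≤ ‖seqInner x x‖ :=
  CStarAlgebra.norm_le_norm_of_nonneg_of_le (sum_star_mul_self_nonneg x s)
    (hx.sum_le_tsum s (fun _ _ => star_mul_self_nonneg _))

lemma summable_inner {x y : ℕ → A} (hx : MemHilbSeq x) (hy : MemHilbSeq y) :
    Summable fun n => star (x n) * y n := by
  rw [summable_iff_vanishing_norm]
  intro ε hε
  have hT : (0:ℝ) ≤ ‖seqInner y y‖ := norm_nonneg _
  set δ : ℝ := (ε/2)^2 / (‖seqInner y y‖ + 1) with hδdef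
  have hδ : 0 < δ := by positivity
  obtain ⟨s, hs⟩ := summable_iff_vanishing_norm.mp hx δ hδ
  refine ⟨s, fun t ht => ?_⟩
  have h1 : ‖∑ n ∈ t, star (x n) * y n‖ ≤
      Real.sqrt ‖∑ n ∈ t, star (x n) * x n‖ * Real.sqrt ‖∑ n ∈ t, star (y n) * y n‖ :=
    cs_fin t x y
  have h2 : Real.sqrt ‖∑ n ∈ t, star (x n) * x n‖ ≤ Real.sqrt δ :=
    Real.sqrt_le_sqrt (hs t ht).le
  have h3 : Real.sqrt ‖∑ n ∈ t, star (y n) * y n‖ ≤ Real.sqrt (‖seqInner y y‖ + 1) :=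
    Real.sqrt_le_sqrt (by linarith [norm_sum_le_norm_tsum hy t])
  have h4 : Real.sqrt δ * Real.sqrt (‖seqInner y y‖ + 1) = ε/2 := by
    rw [← Real.sqrt_mul hδ.le, hδdef, div_mul_cancel₀]
    · exact Real.sqrt_sq (by positivity)
    · positivity
  calc ‖∑ n ∈ t, star (x n) * y n‖
      ≤ Real.sqrt δ * Real.sqrt (‖seqInner y y‖ + 1) := by
        refine h1.trans (mul_le_mul h2 h3 (Real.sqrt_nonneg _) (Real.sqrt_nonneg _))
    _ = ε/2 := h4
    _ < ε := by linarith

lemma norm_seqInner_le {x y : ℕ → A} (hx : MemHilbSeq x) (hy : MemHilbSeq y) :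
    ‖seqInner x y‖ ≤ seqNorm x * seqNorm y := by
  have h := (summable_inner hx hy).hasSum
  refine le_of_tendsto h.norm ?_
  filter_upwards with s
  refine (cs_fin s x y).trans ?_
  exact mul_le_mul (Real.sqrt_le_sqrt (norm_sum_le_norm_tsum hx s))
    (Real.sqrt_le_sqrt (norm_sum_le_norm_tsum hy s)) (Real.sqrt_nonneg _) (Real.sqrt_nonneg _)

lemma seqNorm_nonneg (x : ℕ → A) : 0 ≤ seqNorm x := Real.sqrt_nonneg _

lemma memHilbSeq_add {x y : ℕ → A} (hx : MemHilbSeq x) (hy : MemHilbSeq y) :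
    MemHilbSeq (x + y) := by
  have : (fun n => star ((x + y) n) * ((x + y) n)) = fun n =>
      (star (x n) * x n + star (x n) * y n) + (star (y n) * x n + star (y n) * y n) := by
    funext n
    simp only [Pi.add_apply, star_add]
    noncomm_ring
  rw [MemHilbSeq, this]
  exact ((hx.add (summable_inner hx hy)).add ((summable_inner hy hx).add hy))

lemma memHilbSeq_neg {x : ℕ → A} (hx : MemHilbSeq x) : MemHilbSeq (-x) := by
  have : (fun n => star ((-x) n) * ((-x) n)) = fun n => star (x n) * x n := by
    funext n; simp
  rwa [MemHilbSeq, this]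

lemma memHilbSeq_sub {x y : ℕ → A} (hx : MemHilbSeq x) (hy : MemHilbSeq y) :
    MemHilbSeq (x - y) := by
  rw [sub_eq_add_neg]; exact memHilbSeq_add hx (memHilbSeq_neg hy)

lemma memHilbSeq_zero : MemHilbSeq (0 : ℕ → A) := by
  have : (fun n => star ((0 : ℕ → A) n) * ((0 : ℕ → A) n)) = fun _ => (0:A) := by
    funext n; simp
  rw [MemHilbSeq, this]; exact summable_zero

lemma memHilbSeq_smul (c : ℂ) {x : ℕ → A} (hx : MemHilbSeq x) : MemHilbSeq (c • x) := by
  have : (fun n => star ((c • x) n) * ((c • x) n)) = fun n =>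
      (star c * c) • (star (x n) * x n) := by
    funext n
    simp [Pi.smul_apply, star_smul, smul_mul_smul_comm]
  rw [MemHilbSeq, this]
  exact hx.const_smul _

lemma memHilbSeq_mulRight {x : ℕ → A} (hx : MemHilbSeq x) (a : A) :
    MemHilbSeq (fun n => x n * a) := by
  have h : Continuous fun b : A => star a * b * a := by fun_prop
  have := hx.map (AddMonoidHom.mk' (fun b => star a * b * a)
    (fun b c => by noncomm_ring)) h
  have heq : (fun n => star (x n * a) * (x n * a)) =
      fun n => star a * (star (x n) * x n) * a := by
    funext n; simp only [star_mul]; noncomm_ring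
  rw [MemHilbSeq, heq]
  exact this

lemma seqInner_mulRight_self {x : ℕ → A} (hx : MemHilbSeq x) (a : A) :
    seqInner (fun n => x n * a) (fun n => x n * a) = star a * seqInner x x * a := by
  have h : Continuous fun b : A => star a * b * a := by fun_prop
  have heq : (fun n => star (x n * a) * (x n * a)) =
      fun n => star a * (star (x n) * x n) * a := by
    funext n; simp only [star_mul]; noncomm_ring
  rw [seqInner, heq]
  exact (hx.hasSum.map (AddMonoidHom.mk' (fun b => star a * b * a)
    (fun b c => by noncomm_ring)) h).tsum_eq

lemma seqNorm_mulRight_le {x : ℕ → A} (hx : MemHilbSeq x) (a : A) :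
    seqNorm (fun n => x n * a) ≤ seqNorm x * ‖a‖ := by
  rw [seqNorm, seqInner_mulRight_self hx a]
  have h1 : ‖star a * seqInner x x * a‖ ≤ ‖seqInner x x‖ * ‖a‖^2 := by
    calc ‖star a * seqInner x x * a‖ ≤ ‖star a * seqInner x x‖ * ‖a‖ := norm_mul_le _ _
      _ ≤ ‖star a‖ * ‖seqInner x x‖ * ‖a‖ := by gcongr; exact norm_mul_le _ _
      _ = ‖seqInner x x‖ * ‖a‖^2 := by rw [norm_star]; ring
  refine (Real.sqrt_le_sqrt h1).trans ?_
  rw [Real.sqrt_mul (norm_nonneg _), Real.sqrt_sq (norm_nonneg _)]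
  exact le_refl _

lemma seqNorm_neg (x : ℕ → A) : seqNorm (-x) = seqNorm x := by
  rw [seqNorm, seqNorm]
  congr 2
  rw [seqInner, seqInner]
  refine tsum_congr fun n => by simp

lemma seqNorm_sub_rev (x y : ℕ → A) : seqNorm (x - y) = seqNorm (y - x) := by
  rw [← seqNorm_neg (x - y), neg_sub]

lemma seqNorm_zero : seqNorm (0 : ℕ → A) = 0 := by
  have : seqInner (0 : ℕ → A) 0 = 0 := by
    rw [seqInner]
    have h0 : (fun n => star ((0 : ℕ → A) n) * (0 : ℕ → A) n) = fun _ => (0:A) := by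
      funext n; simp
    rw [h0, tsum_zero]
  simp [seqNorm, this]

lemma seqInner_add_add {x y : ℕ → A} (hx : MemHilbSeq x) (hy : MemHilbSeq y) :
    seqInner (x + y) (x + y) =
      seqInner x x + seqInner x y + (seqInner y x + seqInner y y) := by
  have heq : (fun n => star ((x + y) n) * ((x + y) n)) = fun n =>
      (star (x n) * x n + star (x n) * y n) + (star (y n) * x n + star (y n) * y n) := by
    funext n
    simp only [Pi.add_apply, star_add]
    noncomm_ring
  rw [seqInner, heq, Summable.tsum_add ((hx.add (summable_inner hx hy)))
    ((summable_inner hy hx).add hy), Summable.tsum_add hx (summable_inner hx hy),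
    Summable.tsum_add (summable_inner hy hx) hy]
  rfl

lemma seqNorm_triangle {x y : ℕ → A} (hx : MemHilbSeq x) (hy : MemHilbSeq y) :
    seqNorm (x + y) ≤ seqNorm x + seqNorm y := by
  have hxx : ‖seqInner x x‖ = seqNorm x ^ 2 := by
    rw [seqNorm, Real.sq_sqrt (norm_nonneg _)]
  have hyy : ‖seqInner y y‖ = seqNorm y ^ 2 := by
    rw [seqNorm, Real.sq_sqrt (norm_nonneg _)]
  have h : ‖seqInner (x + y) (x + y)‖ ≤ (seqNorm x + seqNorm y) ^ 2 := by
    rw [seqInner_add_add hx hy]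
    calc ‖seqInner x x + seqInner x y + (seqInner y x + seqInner y y)‖
        ≤ ‖seqInner x x‖ + ‖seqInner x y‖ + (‖seqInner y x‖ + ‖seqInner y y‖) := by
          refine (norm_add_le _ _).trans ?_
          gcongr <;> exact norm_add_le _ _
      _ ≤ seqNorm x ^ 2 + seqNorm x * seqNorm y + (seqNorm y * seqNorm x + seqNorm y ^ 2) := by
          rw [hxx, hyy]
          gcongr
          · exact norm_seqInner_le hx hy
          · exact norm_seqInner_le hy hx
      _ = (seqNorm x + seqNorm y) ^ 2 := by ring
  calc seqNorm (x + y) = Real.sqrt ‖seqInner (x + y) (x + y)‖ := rfl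
    _ ≤ Real.sqrt ((seqNorm x + seqNorm y) ^ 2) := Real.sqrt_le_sqrt h
    _ = seqNorm x + seqNorm y := Real.sqrt_sq (add_nonneg (seqNorm_nonneg x) (seqNorm_nonneg y))

lemma seqNorm_smul_le (c : ℂ) {x : ℕ → A} (hx : MemHilbSeq x) :
    seqNorm (c • x) ≤ ‖c‖ * seqNorm x := by
  have heq : (fun n => star ((c • x) n) * ((c • x) n)) = fun n =>
      (star c * c) • (star (x n) * x n) := by
    funext n
    simp [Pi.smul_apply, star_smul, smul_mul_smul_comm]
  have h2 : seqInner (c • x) (c • x) = (star c * c) • seqInner x x := by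
    rw [seqInner, heq, seqInner]
    exact (hx.hasSum.const_smul _).tsum_eq
  rw [seqNorm, h2, norm_smul]
  have : ‖star c * c‖ = ‖c‖^2 := by
    rw [norm_mul, norm_star]; ring
  rw [this, Real.sqrt_mul (by positivity), Real.sqrt_sq (norm_nonneg _)]
  exact le_of_eq (by rw [seqNorm])

lemma memHilbSeq_sum {ι : Type*} (s : Finset ι) (f : ι → ℕ → A)
    (hf : ∀ i ∈ s, MemHilbSeq (f i)) : MemHilbSeq (∑ i ∈ s, f i) := by
  classical
  induction s using Finset.induction_on with
  | empty => simpa using memHilbSeq_zero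
  | insert _ _ hnot ih =>
    rw [Finset.sum_insert hnot]
    exact memHilbSeq_add (hf _ (Finset.mem_insert_self _ _))
      (ih fun i hi => hf i (Finset.mem_insert_of_mem hi))

lemma seqNorm_sum_le {ι : Type*} (s : Finset ι) (f : ι → ℕ → A)
    (hf : ∀ i ∈ s, MemHilbSeq (f i)) :
    seqNorm (∑ i ∈ s, f i) ≤ ∑ i ∈ s, seqNorm (f i) := by
  classical
  induction s using Finset.induction_on with
  | empty => simpa using le_of_eq seqNorm_zero
  | insert _ _ hnot ih =>
    rename_i a s'
    rw [Finset.sum_insert hnot, Finset.sum_insert hnot]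
    refine (seqNorm_triangle (hf _ (Finset.mem_insert_self _ _))
      (memHilbSeq_sum s' f fun i hi => hf i (Finset.mem_insert_of_mem hi))).trans ?_
    gcongr
    exact ih fun i hi => hf i (Finset.mem_insert_of_mem hi)

def projA (w : A) (N : ℕ) (z : ℕ → A) : ℕ → A := fun m => if m < N then w * z m else 0

lemma memHilbSeq_projA (w : A) (N : ℕ) (z : ℕ → A) : MemHilbSeq (projA w N z) := by
  refine summable_of_ne_finset_zero (s := Finset.range N) fun m hm => ?_
  have h : ¬ m < N := by simpa using hm
  simp [projA, h]

lemma seqInner_projA_self (w : A) (N : ℕ) (z : ℕ → A) :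
    seqInner (projA w N z) (projA w N z) =
      ∑ m ∈ Finset.range N, star (w * z m) * (w * z m) := by
  rw [seqInner, tsum_eq_sum (s := Finset.range N) ?_]
  · exact Finset.sum_congr rfl fun m hm => by simp [projA, Finset.mem_range.mp hm]
  · intro m hm
    have h : ¬ m < N := by simpa using hm
    simp [projA, h]

lemma seqNorm_projA_le {z : ℕ → A} (hz : MemHilbSeq z) {w : A} (hw1 : ‖w‖ ≤ 1) (N : ℕ) :
    seqNorm (projA w N z) ≤ seqNorm z := by
  have key : ∀ m : ℕ, star (w * z m) * (w * z m) ≤ ‖star w * w‖ • (star (z m) * z m) := by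
    intro m
    have h := CStarAlgebra.star_left_conjugate_le_norm_smul (a := z m) (b := star w * w)
      (IsSelfAdjoint.star_mul_self w)
    calc star (w * z m) * (w * z m) = star (z m) * (star w * w) * z m := by
          simp only [star_mul]; noncomm_ring
      _ ≤ _ := h
  have hsum : ∑ m ∈ Finset.range N, star (w * z m) * (w * z m)
      ≤ ‖star w * w‖ • ∑ m ∈ Finset.range N, star (z m) * z m := by
    rw [Finset.smul_sum]
    exact Finset.sum_le_sum fun m _ => key m
  have h0 : (0:A) ≤ ∑ m ∈ Finset.range N, star (w * z m) * (w * z m) :=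
    Finset.sum_nonneg fun _ _ => star_mul_self_nonneg _
  have hw2 : ‖star w * w‖ ≤ 1 := by
    rw [CStarRing.norm_star_mul_self]
    exact mul_le_one₀ hw1 (norm_nonneg w) hw1
  have hn : ‖seqInner (projA w N z) (projA w N z)‖ ≤ ‖seqInner z z‖ := by
    rw [seqInner_projA_self]
    refine (CStarAlgebra.norm_le_norm_of_nonneg_of_le h0 hsum).trans ?_
    rw [norm_smul, Real.norm_eq_abs, abs_of_nonneg (norm_nonneg _)]
    calc ‖star w * w‖ * ‖∑ m ∈ Finset.range N, star (z m) * z m‖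
        ≤ 1 * ‖seqInner z z‖ := by
          exact mul_le_mul hw2 (norm_sum_le_norm_tsum hz _) (norm_nonneg _) zero_le_one
      _ = ‖seqInner z z‖ := one_mul _
  exact Real.sqrt_le_sqrt hn

lemma seqInner_projA_comm {w : A} (hw : star w = w) (N : ℕ) (v z : ℕ → A) :
    seqInner v (projA w N z) = seqInner (projA w N v) z := by
  rw [seqInner, seqInner]
  refine tsum_congr fun m => ?_
  by_cases h : m < N
  · simp only [projA, if_pos h, star_mul, hw, mul_assoc]
  · simp [projA, h]

lemma projA_sub (w : A) (N : ℕ) (y z : ℕ → A) :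
    projA w N (y - z) = projA w N y - projA w N z := by
  funext m
  by_cases h : m < N <;> simp [projA, h, mul_sub]

lemma norm_le_of_inr {a b : A} (ha : 0 ≤ (a : Unitization ℂ A))
    (hab : (a : Unitization ℂ A) ≤ (b : Unitization ℂ A)) : ‖a‖ ≤ ‖b‖ := by
  rw [← Unitization.norm_inr (𝕜 := ℂ) a, ← Unitization.norm_inr (𝕜 := ℂ) b]
  exact CStarAlgebra.norm_le_norm_of_nonneg_of_le ha hab

lemma inr_bounds {w : A} (hw0 : 0 ≤ w) (hw1 : ‖w‖ ≤ 1) (x : A) :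
    ((star (x - w * x) * (x - w * x) : A) : Unitization ℂ A)
        ≤ ((star x * x - star x * (w * x) : A) : Unitization ℂ A) ∧
    (0 : Unitization ℂ A) ≤ ((star x * x - star x * (w * x) : A) : Unitization ℂ A) ∧
    ((star x * x - star x * (w * x) : A) : Unitization ℂ A)
        ≤ ((star x * x : A) : Unitization ℂ A) := by
  set B := Unitization ℂ A
  set X : B := (x : B) with hX
  set W : B := (w : B) with hW
  have hWsa : IsSelfAdjoint W := (IsSelfAdjoint.of_nonneg hw0).inr ℂ
  have hW1 : W ≤ 1 := (CStarAlgebra.inr_mem_Icc_iff_norm_le.mpr ⟨hw0, hw1⟩).2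
  have hW0 : (0:B) ≤ W := Unitization.inr_nonneg_iff.mpr hw0
  set V : B := 1 - W with hV
  have hV0 : (0:B) ≤ V := sub_nonneg.mpr hW1
  have hV1 : V ≤ 1 := sub_le_self _ hW0
  have hVV : V * V ≤ V := by
    have h := CStarAlgebra.pow_antitone hV0 hV1 (by norm_num : (1:ℕ) ≤ 2)
    simpa [pow_two] using h
  have ht : ((star (x - w * x) * (x - w * x) : A) : B) = star X * (V * V) * X := by
    push_cast [Unitization.inr_mul, Unitization.inr_sub, Unitization.inr_star]
    rw [← hX, ← hW]
    simp only [hV, star_sub, star_mul, star_one, hWsa.star_eq]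
    simp only [sub_mul, mul_sub, one_mul, mul_one, mul_assoc, neg_mul, mul_neg]
  have hr : ((star x * x - star x * (w * x) : A) : B) = star X * V * X := by
    push_cast [Unitization.inr_mul, Unitization.inr_sub, Unitization.inr_star]
    rw [← hX, ← hW]
    simp only [hV]
    simp only [sub_mul, mul_sub, one_mul, mul_one, mul_assoc, neg_mul, mul_neg]
  refine ⟨?_, ?_, ?_⟩
  · rw [ht, hr]
    exact star_left_conjugate_le_conjugate hVV X
  · rw [hr]
    have h := star_left_conjugate_le_conjugate hV0 X
    simpa using h
  · rw [hr]
    have h := star_left_conjugate_le_conjugate hV1 X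
    have hx' : ((star x * x : A) : B) = star X * X := by
      push_cast [Unitization.inr_mul, Unitization.inr_star]
      rfl
    rw [hx']
    simpa using h

lemma inr_finsum (s : Finset ℕ) (f : ℕ → A) :
    ((∑ m ∈ s, f m : A) : Unitization ℂ A) = ∑ m ∈ s, ((f m : Unitization ℂ A)) := by
  have h := map_sum (Unitization.inrNonUnitalStarAlgHom ℂ A) f s
  exact h

lemma norm_sum_t_le_r {w : A} (hw0 : 0 ≤ w) (hw1 : ‖w‖ ≤ 1) (x : ℕ → A) (s : Finset ℕ) :
    ‖∑ m ∈ s, star (x m - w * x m) * (x m - w * x m)‖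
      ≤ ‖∑ m ∈ s, (star (x m) * x m - star (x m) * (w * x m))‖ := by
  refine norm_le_of_inr ?_ ?_
  · exact Unitization.inr_nonneg_iff.mpr
      (Finset.sum_nonneg fun _ _ => star_mul_self_nonneg _)
  · rw [inr_finsum, inr_finsum]
    exact Finset.sum_le_sum fun m _ => (inr_bounds hw0 hw1 (x m)).1

lemma norm_sum_r_le_q {w : A} (hw0 : 0 ≤ w) (hw1 : ‖w‖ ≤ 1) (x : ℕ → A) (s : Finset ℕ) :
    ‖∑ m ∈ s, (star (x m) * x m - star (x m) * (w * x m))‖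
      ≤ ‖∑ m ∈ s, star (x m) * x m‖ := by
  refine norm_le_of_inr ?_ ?_
  · rw [inr_finsum]
    exact Finset.sum_nonneg fun m _ => (inr_bounds hw0 hw1 (x m)).2.1
  · rw [inr_finsum, inr_finsum]
    exact Finset.sum_le_sum fun m _ => (inr_bounds hw0 hw1 (x m)).2.2

lemma proj_tendsto (u : ℕ → A) (hu_pos : ∀ n, 0 ≤ u n) (hu_norm : ∀ n, ‖u n‖ ≤ 1)
    (hu_apprL : ∀ a : A, Filter.Tendsto (fun n => ‖u n * a - a‖) Filter.atTop (nhds 0))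
    {x : ℕ → A} (hx : MemHilbSeq x) :
    ∀ δ : ℝ, 0 < δ → ∃ N, ∀ k ≥ N, seqNorm (projA (u k) (k+1) x - x) ≤ δ := by
  intro δ hδ
  classical
  set q : ℕ → A := fun m => star (x m) * x m with hq
  set S : ℕ → A := fun k => ∑ m ∈ Finset.range k, q m with hSdef
  have hS : Filter.Tendsto S Filter.atTop (nhds (seqInner x x)) := hx.hasSum.tendsto_sum_nat
  have hS1 : Filter.Tendsto (fun n => S (n+1)) Filter.atTop (nhds (seqInner x x)) :=
    hS.comp (Filter.tendsto_add_atTop_nat 1)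
  -- decomposition bound
  have hdecomp : ∀ n : ℕ,
      ‖seqInner (projA (u n) (n+1) x - x) (projA (u n) (n+1) x - x)‖
        ≤ ‖∑ m ∈ Finset.range (n+1), star (x m - u n * x m) * (x m - u n * x m)‖
          + ‖seqInner x x - S (n+1)‖ := by
    intro n
    set w := u n with hwdef
    set f1 : ℕ → A := fun m =>
      if m < n+1 then star (x m - w * x m) * (x m - w * x m) else 0 with hf1
    set f2 : ℕ → A := fun m => if m < n+1 then 0 else q m with hf2
    have hfun : (fun m => star ((projA w (n+1) x - x) m) * ((projA w (n+1) x - x) m))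
        = fun m => f1 m + f2 m := by
      funext m
      by_cases h : m < n+1
      · have h1 : (projA w (n+1) x - x) m = -(x m - w * x m) := by
          simp [projA, h]
        simp only [hf1, hf2, if_pos h, if_neg, add_zero, h1, star_neg, neg_mul_neg]
      · have h1 : (projA w (n+1) x - x) m = -(x m) := by
          simp [projA, h]
        simp [h1, hf1, hf2, h, q, eq_false (by omega : ¬ m ≤ n)]
    have hsum1 : Summable f1 := by
      refine summable_of_ne_finset_zero (s := Finset.range (n+1)) fun m hm => ?_
      have h : ¬ m < n+1 := by simpa using hm
      simp [hf1, h, eq_false (by omega : ¬ m ≤ n)]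
    have hsumite : Summable (fun m => if m < n+1 then q m else 0) := by
      refine summable_of_ne_finset_zero (s := Finset.range (n+1)) fun m hm => ?_
      have h : ¬ m < n+1 := by simpa using hm
      simp [h]
    have hf2eq : f2 = fun m => q m - (if m < n+1 then q m else 0) := by
      funext m; by_cases h : m < n+1 <;> rw [Nat.lt_add_one_iff] at h <;> simp [hf2, h]
    have hsum2 : Summable f2 := by
      rw [hf2eq]; exact hx.sub hsumite
    have htsum1 : ∑' m, f1 m
        = ∑ m ∈ Finset.range (n+1), star (x m - w * x m) * (x m - w * x m) := by
      rw [tsum_eq_sum (s := Finset.range (n+1)) ?_]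
      · exact Finset.sum_congr rfl fun m hm => by simp [hf1, Finset.mem_range.mp hm, eq_false (by have := Finset.mem_range.mp hm; omega : ¬ n < m)]
      · intro m hm
        have h : ¬ m < n+1 := by simpa using hm
        simp [hf1, h, eq_false (by omega : ¬ m ≤ n)]
    have htsumite : ∑' m, (if m < n+1 then q m else 0) = S (n+1) := by
      rw [tsum_eq_sum (s := Finset.range (n+1)) ?_]
      · exact Finset.sum_congr rfl fun m hm => by simp [Finset.mem_range.mp hm]
      · intro m hm
        have h : ¬ m < n+1 := by simpa using hm
        simp [h]
    have htsum2 : ∑' m, f2 m = seqInner x x - S (n+1) := by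
      rw [hf2eq, Summable.tsum_sub hx hsumite, htsumite]
      rfl
    have hinner : seqInner (projA w (n+1) x - x) (projA w (n+1) x - x)
        = (∑ m ∈ Finset.range (n+1), star (x m - w * x m) * (x m - w * x m))
          + (seqInner x x - S (n+1)) := by
      rw [seqInner, hfun, Summable.tsum_add hsum1 hsum2, htsum1, htsum2]
    rw [hinner]
    exact norm_add_le _ _
  -- choose the three thresholds
  have hδ3 : 0 < δ^2/3 := by positivity
  obtain ⟨M0, hM0⟩ : ∃ M0, ∀ n ≥ M0, ‖seqInner x x - S (n+1)‖ ≤ δ^2/3 := by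
    obtain ⟨N, hN⟩ := NormedAddCommGroup.tendsto_atTop.mp hS1 (δ^2/3) hδ3
    exact ⟨N, fun n hn => by
      rw [norm_sub_rev]
      exact (hN n hn).le⟩
  obtain ⟨M, hM⟩ : ∃ M, ∀ n ≥ M, ‖S (n+1) - S M‖ ≤ δ^2/3 := by
    obtain ⟨N, hN⟩ := NormedAddCommGroup.tendsto_atTop.mp hS (δ^2/6) (by positivity)
    refine ⟨N, fun n hn => ?_⟩
    calc ‖S (n+1) - S N‖ = ‖(S (n+1) - seqInner x x) + (seqInner x x - S N)‖ := by abel_nf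
      _ ≤ ‖S (n+1) - seqInner x x‖ + ‖seqInner x x - S N‖ := norm_add_le _ _
      _ ≤ δ^2/6 + δ^2/6 := by
          refine add_le_add (hN (n+1) (by omega)).le ?_
          rw [norm_sub_rev]
          exact (hN N le_rfl).le
      _ = δ^2/3 := by ring
  have hhead : Filter.Tendsto
      (fun n => ∑ m ∈ Finset.range M, ‖x m‖ * ‖u n * x m - x m‖)
      Filter.atTop (nhds 0) := by
    have : ∀ m ∈ Finset.range M, Filter.Tendsto
        (fun n => ‖x m‖ * ‖u n * x m - x m‖) Filter.atTop (nhds 0) := fun m _ => by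
      simpa using tendsto_const_nhds.mul (hu_apprL (x m))
    simpa using tendsto_finset_sum (Finset.range M) this
  obtain ⟨N2, hN2⟩ : ∃ N2, ∀ n ≥ N2,
      ∑ m ∈ Finset.range M, ‖x m‖ * ‖u n * x m - x m‖ ≤ δ^2/3 := by
    obtain ⟨N, hN⟩ := Filter.eventually_atTop.mp (hhead.eventually_le_const hδ3)
    exact ⟨N, hN⟩
  refine ⟨max M0 (max M N2), fun n hn => ?_⟩
  have hnM0 : n ≥ M0 := le_trans (le_max_left _ _) hn
  have hnM : n ≥ M := le_trans (le_trans (le_max_left _ _) (le_max_right _ _)) hn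
  have hnN2 : n ≥ N2 := le_trans (le_trans (le_max_right _ _) (le_max_right _ _)) hn
  set w := u n with hwdef
  have hsubset : Finset.range M ⊆ Finset.range (n+1) :=
    Finset.range_subset_range.mpr (by omega)
  set r : ℕ → A := fun m => star (x m) * x m - star (x m) * (w * x m) with hr
  have hmain : ‖∑ m ∈ Finset.range (n+1), star (x m - w * x m) * (x m - w * x m)‖
      ≤ δ^2/3 + δ^2/3 := by
    refine (norm_sum_t_le_r (hu_pos n) (hu_norm n) x _).trans ?_
    have hsplit : ∑ m ∈ Finset.range (n+1), r m
        = ∑ m ∈ Finset.range (n+1) \ Finset.range M, r m + ∑ m ∈ Finset.range M, r m :=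
      (Finset.sum_sdiff hsubset).symm
    calc ‖∑ m ∈ Finset.range (n+1), r m‖
        ≤ ‖∑ m ∈ Finset.range (n+1) \ Finset.range M, r m‖
          + ‖∑ m ∈ Finset.range M, r m‖ := by rw [hsplit]; exact norm_add_le _ _
      _ ≤ δ^2/3 + δ^2/3 := by
          refine add_le_add ?_ ?_
          · refine (norm_sum_r_le_q (hu_pos n) (hu_norm n) x _).trans ?_
            have : ∑ m ∈ Finset.range (n+1) \ Finset.range M, star (x m) * x m
                = S (n+1) - S M := by
              rw [Finset.sum_sdiff_eq_sub hsubset]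
            rw [this]
            exact hM n hnM
          · refine (norm_sum_le _ _).trans ?_
            refine le_trans (Finset.sum_le_sum ?_) (hN2 n hnN2)
            intro m _
            have : r m = star (x m) * (x m - w * x m) := by rw [hr]; noncomm_ring
            rw [this]
            calc ‖star (x m) * (x m - w * x m)‖
                ≤ ‖star (x m)‖ * ‖x m - w * x m‖ := norm_mul_le _ _
              _ = ‖x m‖ * ‖w * x m - x m‖ := by rw [norm_star, norm_sub_rev]
  have hfinal : ‖seqInner (projA w (n+1) x - x) (projA w (n+1) x - x)‖ ≤ δ^2 := by
    refine (hdecomp n).trans ?_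
    have := hM0 n hnM0
    linarith [hmain]
  calc seqNorm (projA w (n+1) x - x)
      = Real.sqrt ‖seqInner (projA w (n+1) x - x) (projA w (n+1) x - x)‖ := rfl
    _ ≤ Real.sqrt (δ^2) := Real.sqrt_le_sqrt hfinal
    _ = δ := Real.sqrt_sq hδ.le

lemma memHilbSeq_theta {x : ℕ → A} (hx : MemHilbSeq x) (y z : ℕ → A) :
    MemHilbSeq (seqTheta x y z) := memHilbSeq_mulRight hx (seqInner y z)

lemma seqNorm_theta_le {x y z : ℕ → A} (hx : MemHilbSeq x) (hy : MemHilbSeq y)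
    (hz : MemHilbSeq z) :
    seqNorm (seqTheta x y z) ≤ seqNorm x * (seqNorm y * seqNorm z) := by
  refine le_trans (seqNorm_mulRight_le hx (seqInner y z)) ?_
  exact mul_le_mul_of_nonneg_left (norm_seqInner_le hy hz) (seqNorm_nonneg x)

lemma seqInner_sub_left {x y z : ℕ → A} (hx : MemHilbSeq x) (hy : MemHilbSeq y)
    (hz : MemHilbSeq z) :
    seqInner (x - y) z = seqInner x z - seqInner y z := by
  rw [seqInner, seqInner, seqInner]
  have heq : (fun m => star ((x - y) m) * z m)
      = fun m => star (x m) * z m - star (y m) * z m := by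
    funext m; simp [sub_mul]
  rw [heq, Summable.tsum_sub (summable_inner hx hz) (summable_inner hy hz)]

lemma frameRoot_star (u : ℕ → A) (i : ℕ) : star (frameRoot u i) = frameRoot u i := by
  have h : 0 ≤ frameRoot u i := by
    cases i with
    | zero => exact CFC.sqrt_nonneg _
    | succ i => exact CFC.sqrt_nonneg _
  exact (IsSelfAdjoint.of_nonneg h).star_eq

lemma frameRoot_sum_sq (u : ℕ → A) (hu_pos : ∀ n, 0 ≤ u n) (hu_mono : Monotone u) (k : ℕ) :
    ∑ i ∈ Finset.range (k+1), frameRoot u i * frameRoot u i = u k := by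
  induction k with
  | zero =>
    rw [Finset.sum_range_one]
    exact CFC.sqrt_mul_sqrt_self (u 0) (hu_pos 0)
  | succ k ih =>
    rw [Finset.sum_range_succ, ih]
    have : frameRoot u (k+1) * frameRoot u (k+1) = u (k+1) - u k :=
      CFC.sqrt_mul_sqrt_self _ (sub_nonneg.mpr (hu_mono (Nat.le_succ k)))
    rw [this, add_sub_cancel]

lemma seqInner_frameElem (u : ℕ → A) (i j : ℕ) (y : ℕ → A) :
    seqInner (frameElem u i j) y = star (frameRoot u i) * y j := by
  rw [seqInner, tsum_eq_single j ?_]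
  · simp [frameElem]
  · intro k hk
    simp [frameElem, hk]

lemma double_sum_eq (u : ℕ → A) (hu_pos : ∀ n, 0 ≤ u n) (hu_mono : Monotone u)
    (k : ℕ) (y : ℕ → A) :
    (∑ i ∈ Finset.range (k+1), ∑ j ∈ Finset.range (k+1),
      seqTheta (frameElem u i j) (frameElem u i j) y) = projA (u k) (k+1) y := by
  funext m
  rw [Finset.sum_apply]
  have inner_eq : ∀ i,
      (∑ j ∈ Finset.range (k+1), seqTheta (frameElem u i j) (frameElem u i j) y) m
        = if m < k+1 then frameRoot u i * (frameRoot u i * y m) else 0 := by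
    intro i
    rw [Finset.sum_apply]
    have hterm : ∀ j, seqTheta (frameElem u i j) (frameElem u i j) y m
        = if m = j then frameRoot u i * (star (frameRoot u i) * y j) else 0 := by
      intro j
      show (if m = j then frameRoot u i else 0) * seqInner (frameElem u i j) y = _
      rw [seqInner_frameElem, ite_mul, zero_mul]
    rw [Finset.sum_congr rfl fun j _ => hterm j, Finset.sum_ite_eq]
    simp [Finset.mem_range, frameRoot_star]
  rw [Finset.sum_congr rfl fun i _ => inner_eq i]
  by_cases hm : m < k+1
  · simp only [if_pos hm, projA]
    have hassoc : ∀ i, frameRoot u i * (frameRoot u i * y m)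
        = (frameRoot u i * frameRoot u i) * y m := fun i => (mul_assoc _ _ _).symm
    rw [Finset.sum_congr rfl fun i _ => hassoc i, ← Finset.sum_mul,
      frameRoot_sum_sq u hu_pos hu_mono k]
  · simp [hm, projA]

lemma bound_sum {n' : ℕ} (c : Fin n' → ℂ) (f g : Fin n' → ℕ → A) (z : ℕ → A)
    (hf : ∀ i, MemHilbSeq (f i)) (hg : ∀ i, MemHilbSeq (g i)) (hz : MemHilbSeq z) :
    seqNorm (∑ i, c i • seqTheta (f i) (g i) z)
      ≤ ∑ i, ‖c i‖ * (seqNorm (f i) * (seqNorm (g i) * seqNorm z)) := by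
  refine le_trans (seqNorm_sum_le _ _ fun i _ =>
    memHilbSeq_smul _ (memHilbSeq_theta (hf i) _ _)) ?_
  refine Finset.sum_le_sum fun i _ => ?_
  refine le_trans (seqNorm_smul_le _ (memHilbSeq_theta (hf i) _ _)) ?_
  exact mul_le_mul_of_nonneg_left (seqNorm_theta_le (hf i) (hg i) hz) (norm_nonneg _)

end Aux

/-- If `A` is a σ-unital C*-algebra with increasing positive sequential
approximate identity `(uₙ)` and `e_{ij} ∈ H_A` are as above, then the finite sums
`Σ_{i,j<n} Θ_{e_{ij}, e_{ij}}` form an approximate unit for `K(H_A)`; that is, the family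
`(e_{ij})` is a frame for the standard Hilbert module `H_A`. -/
theorem frame_for_standard_module
    {A : Type*} [NonUnitalCStarAlgebra A] [PartialOrder A] [StarOrderedRing A]
    (u : ℕ → A) (hu_pos : ∀ n, 0 ≤ u n) (hu_mono : Monotone u)
    (hu_norm : ∀ n, ‖u n‖ ≤ 1)
    (hu_apprL : ∀ a : A, Filter.Tendsto (fun n => ‖u n * a - a‖) Filter.atTop (nhds 0))
    (hu_apprR : ∀ a : A, Filter.Tendsto (fun n => ‖a * u n - a‖) Filter.atTop (nhds 0)) :
    ∀ T : (ℕ → A) → (ℕ → A), SeqInCompacts T →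
      ∀ ε : ℝ, 0 < ε → ∃ N : ℕ, ∀ n ≥ N, ∀ z, MemHilbSeq z →
        seqNorm ((∑ i ∈ Finset.range n, ∑ j ∈ Finset.range n,
            seqTheta (frameElem u i j) (frameElem u i j) (T z)) - T z) ≤ ε * seqNorm z ∧
        seqNorm (T (∑ i ∈ Finset.range n, ∑ j ∈ Finset.range n,
            seqTheta (frameElem u i j) (frameElem u i j) z) - T z) ≤ ε * seqNorm z := by
  intro T hT ε hε
  obtain ⟨hT1, hT2⟩ := hT
  obtain ⟨n', c, uu, vv, hmem, happrox⟩ := hT2 (ε/3) (by positivity)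
  set C1 : ℝ := ∑ i, ‖c i‖ * seqNorm (vv i) with hC1
  set C2 : ℝ := ∑ i, ‖c i‖ * seqNorm (uu i) with hC2
  have hC1n : 0 ≤ C1 :=
    Finset.sum_nonneg fun i _ => mul_nonneg (norm_nonneg _) (seqNorm_nonneg _)
  have hC2n : 0 ≤ C2 :=
    Finset.sum_nonneg fun i _ => mul_nonneg (norm_nonneg _) (seqNorm_nonneg _)
  set δ : ℝ := (ε/3) / (C1 + C2 + 1) with hδdef
  have hδ : 0 < δ := by positivity
  have hδfull : δ * (C1 + C2 + 1) = ε/3 := by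
    rw [hδdef]; field_simp
  have hδC1 : δ * C1 ≤ ε/3 := by nlinarith
  have hδC2 : δ * C2 ≤ ε/3 := by nlinarith
  have hchoice : ∀ i : Fin n', ∃ N, ∀ k ≥ N,
      seqNorm (projA (u k) (k+1) (uu i) - uu i) ≤ δ ∧
      seqNorm (projA (u k) (k+1) (vv i) - vv i) ≤ δ := by
    intro i
    obtain ⟨N1, h1⟩ := proj_tendsto u hu_pos hu_norm hu_apprL (hmem i).1 δ hδ
    obtain ⟨N2, h2⟩ := proj_tendsto u hu_pos hu_norm hu_apprL (hmem i).2 δ hδ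
    exact ⟨max N1 N2, fun k hk =>
      ⟨h1 k (le_trans (le_max_left _ _) hk), h2 k (le_trans (le_max_right _ _) hk)⟩⟩
  choose Nf hNf using hchoice
  refine ⟨(Finset.univ.sup Nf) + 1, fun n hn z hz => ?_⟩
  obtain ⟨k, rfl⟩ : ∃ k, n = k + 1 := ⟨n - 1, by omega⟩
  have hk : ∀ i : Fin n', Nf i ≤ k := fun i => by
    have h := Finset.le_sup (f := Nf) (Finset.mem_univ i)
    omega
  set w := u k with hw
  have hw0 : 0 ≤ w := hu_pos k
  have hw1 : ‖w‖ ≤ 1 := hu_norm k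
  have hwsa : star w = w := (IsSelfAdjoint.of_nonneg hw0).star_eq
  set F : (ℕ → A) → ℕ → A := fun y => ∑ i, c i • seqTheta (uu i) (vv i) y with hF
  have hmemF : ∀ y : ℕ → A, MemHilbSeq (F y) := fun y =>
    memHilbSeq_sum _ _ fun i _ => memHilbSeq_smul _ (memHilbSeq_theta (hmem i).1 _ _)
  have hTz : MemHilbSeq (T z) := hT1 z hz
  have happz : seqNorm (T z - F z) ≤ ε/3 * seqNorm z := happrox z hz
  have hznn : 0 ≤ seqNorm z := seqNorm_nonneg z
  have e3 : seqNorm (F z - T z) ≤ ε/3 * seqNorm z := by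
    rw [seqNorm_sub_rev]; exact happz
  constructor
  · rw [double_sum_eq u hu_pos hu_mono k (T z)]
    have hdec : projA w (k+1) (T z) - T z =
        (projA w (k+1) (T z - F z)) + (projA w (k+1) (F z) - F z) + (F z - T z) := by
      rw [projA_sub]; abel
    rw [hdec]
    have hm1 : MemHilbSeq (projA w (k+1) (T z - F z)) := memHilbSeq_projA _ _ _
    have hm2 : MemHilbSeq (projA w (k+1) (F z) - F z) :=
      memHilbSeq_sub (memHilbSeq_projA _ _ _) (hmemF z)
    have hm3 : MemHilbSeq (F z - T z) := memHilbSeq_sub (hmemF z) hTz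
    have e1 : seqNorm (projA w (k+1) (T z - F z)) ≤ ε/3 * seqNorm z :=
      le_trans (seqNorm_projA_le (memHilbSeq_sub hTz (hmemF z)) hw1 _) happz
    have e2 : seqNorm (projA w (k+1) (F z) - F z) ≤ ε/3 * seqNorm z := by
      have heq : projA w (k+1) (F z) - F z
          = ∑ i, c i • seqTheta (projA w (k+1) (uu i) - uu i) (vv i) z := by
        funext m
        by_cases h : m < k+1
        · simp only [Pi.sub_apply, hF, projA, if_pos h, Finset.sum_apply, Pi.smul_apply,
            seqTheta, Finset.mul_sum, mul_smul_comm, smul_sub, sub_mul, mul_assoc,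
            ← Finset.sum_sub_distrib]
        · simp only [Pi.sub_apply, hF, projA, if_neg h, Finset.sum_apply, Pi.smul_apply,
            seqTheta, zero_sub, smul_sub, sub_mul, zero_mul, ← Finset.sum_sub_distrib,
            zero_smul, smul_zero, neg_mul, smul_neg, Finset.sum_neg_distrib]
      rw [heq]
      refine le_trans (bound_sum c _ vv z
        (fun i => memHilbSeq_sub (memHilbSeq_projA _ _ _) (hmem i).1)
        (fun i => (hmem i).2) hz) ?_
      have hb : ∀ i : Fin n',
          ‖c i‖ * (seqNorm (projA w (k+1) (uu i) - uu i) * (seqNorm (vv i) * seqNorm z))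
            ≤ ‖c i‖ * (δ * (seqNorm (vv i) * seqNorm z)) := fun i =>
        mul_le_mul_of_nonneg_left
          (mul_le_mul_of_nonneg_right ((hNf i k (hk i)).1)
            (mul_nonneg (seqNorm_nonneg _) hznn)) (norm_nonneg _)
      refine le_trans (Finset.sum_le_sum fun i _ => hb i) ?_
      have hsum_eq : ∑ i, ‖c i‖ * (δ * (seqNorm (vv i) * seqNorm z))
          = δ * seqNorm z * C1 := by
        rw [hC1, Finset.mul_sum]
        exact Finset.sum_congr rfl fun i _ => by ring
      rw [hsum_eq]
      calc δ * seqNorm z * C1 = δ * C1 * seqNorm z := by ring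
        _ ≤ ε/3 * seqNorm z := mul_le_mul_of_nonneg_right hδC1 hznn
    refine le_trans (seqNorm_triangle (memHilbSeq_add hm1 hm2) hm3) ?_
    refine le_trans (add_le_add_left (seqNorm_triangle hm1 hm2) _) ?_
    linarith
  · rw [double_sum_eq u hu_pos hu_mono k z]
    have hPz : MemHilbSeq (projA w (k+1) z) := memHilbSeq_projA _ _ _
    have hTPz : MemHilbSeq (T (projA w (k+1) z)) := hT1 _ hPz
    have e1 : seqNorm (T (projA w (k+1) z) - F (projA w (k+1) z)) ≤ ε/3 * seqNorm z := by
      refine le_trans (happrox _ hPz) ?_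
      exact mul_le_mul_of_nonneg_left (seqNorm_projA_le hz hw1 _) (by positivity)
    have e2 : seqNorm (F (projA w (k+1) z) - F z) ≤ ε/3 * seqNorm z := by
      have heq : F (projA w (k+1) z) - F z
          = ∑ i, c i • seqTheta (uu i) (projA w (k+1) (vv i) - vv i) z := by
        funext m
        have hterm : ∀ i : Fin n',
            seqInner (vv i) (projA w (k+1) z) - seqInner (vv i) z
              = seqInner (projA w (k+1) (vv i) - vv i) z := by
          intro i
          rw [seqInner_sub_left (memHilbSeq_projA _ _ _) (hmem i).2 hz,
            seqInner_projA_comm hwsa]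
        simp only [Pi.sub_apply, hF, Finset.sum_apply, Pi.smul_apply, seqTheta]
        rw [← Finset.sum_sub_distrib]
        refine Finset.sum_congr rfl fun i _ => ?_
        rw [← smul_sub, ← mul_sub, hterm i]
      rw [heq]
      refine le_trans (bound_sum c uu _ z (fun i => (hmem i).1)
        (fun i => memHilbSeq_sub (memHilbSeq_projA _ _ _) (hmem i).2) hz) ?_
      have hb : ∀ i : Fin n',
          ‖c i‖ * (seqNorm (uu i) * (seqNorm (projA w (k+1) (vv i) - vv i) * seqNorm z))
            ≤ ‖c i‖ * (seqNorm (uu i) * (δ * seqNorm z)) := fun i =>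
        mul_le_mul_of_nonneg_left
          (mul_le_mul_of_nonneg_left
            (mul_le_mul_of_nonneg_right ((hNf i k (hk i)).2) hznn)
            (seqNorm_nonneg _)) (norm_nonneg _)
      refine le_trans (Finset.sum_le_sum fun i _ => hb i) ?_
      have hsum_eq : ∑ i, ‖c i‖ * (seqNorm (uu i) * (δ * seqNorm z))
          = δ * seqNorm z * C2 := by
        rw [hC2, Finset.mul_sum]
        exact Finset.sum_congr rfl fun i _ => by ring
      rw [hsum_eq]
      calc δ * seqNorm z * C2 = δ * C2 * seqNorm z := by ring
        _ ≤ ε/3 * seqNorm z := mul_le_mul_of_nonneg_right hδC2 hznn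
    have hdec : T (projA w (k+1) z) - T z =
        (T (projA w (k+1) z) - F (projA w (k+1) z)) + (F (projA w (k+1) z) - F z)
          + (F z - T z) := by abel
    rw [hdec]
    have hm1 : MemHilbSeq (T (projA w (k+1) z) - F (projA w (k+1) z)) :=
      memHilbSeq_sub hTPz (hmemF _)
    have hm2 : MemHilbSeq (F (projA w (k+1) z) - F z) :=
      memHilbSeq_sub (hmemF _) (hmemF z)
    have hm3 : MemHilbSeq (F z - T z) := memHilbSeq_sub (hmemF z) hTz
    refine le_trans (seqNorm_triangle (memHilbSeq_add hm1 hm2) hm3) ?_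
    refine le_trans (add_le_add_left (seqNorm_triangle hm1 hm2) _) ?_
    linarith
end
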